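/- Let H be an infinite-dimensional separable Hilbert space with orthonormal basis (e_n), A⁻¹ a compact positive operator, and define φ₀(x) = ‖x‖² if ‖x‖ ≥ 1 and φ₀(x) = 2 − ‖x‖² otherwise. Then for every t > 0, ψ(t,0) = inf_y { φ₀(y) + ⟨A⁻¹y,y⟩/(2t) } = 1, while φ₀(0) = 2; hence ψ(t,0) does not converge to φ₀(0) as t → 0⁺. -/

import Mathlib

open Filter Set
open scoped Topology RealInnerProductSpace

lemma coeff_tendsto_zero {H : Type*} [NormedAddCommGroup H] [InnerProductSpace ℝ H]
    [CompleteSpace H] (e : HilbertBasis ℕ ℝ H) (y : H) :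
    Tendsto (fun n => ⟪e n, y⟫) atTop (𝓝 0) := by
  have h := (e.hasSum_inner_mul_inner y y).summable
  have h2 : Tendsto (fun n => ⟪y, e n⟫ * ⟪e n, y⟫) atTop (𝓝 0) := h.tendsto_atTop_zero
  have h3 : ∀ n, ⟪y, e n⟫ * ⟪e n, y⟫ = (⟪e n, y⟫) ^ 2 := by
    intro n; rw [real_inner_comm y (e n)]; ring
  simp only [h3] at h2
  have h4 : Tendsto (fun n => |⟪e n, y⟫|) atTop (𝓝 0) := by
    have := h2.sqrt
    simpa [Real.sqrt_sq_eq_abs] using this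
  exact tendsto_zero_iff_abs_tendsto_zero _ |>.2 h4

lemma key_small {H : Type*} [NormedAddCommGroup H] [InnerProductSpace ℝ H]
    [CompleteSpace H] (e : HilbertBasis ℕ ℝ H) (B : H →L[ℝ] H)
    (hB_compact : IsCompactOperator B)
    (hB_symm : ∀ x y : H, ⟪B x, y⟫ = ⟪x, B y⟫) :
    ∀ ε : ℝ, 0 < ε → ∃ n : ℕ, ⟪B (e n), e n⟫ < ε := by
  intro ε hε
  obtain ⟨K, hK, hKsub⟩ :=
    IsCompactOperator.image_closedBall_subset_compact (𝕜₁ := ℝ)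
      (f := (B : H →ₗ[ℝ] H)) hB_compact 1
  have hne : ∀ n : ℕ, ‖(e n : H)‖ = 1 := fun n => e.orthonormal.1 n
  have hmem : ∀ n : ℕ, B (e n) ∈ K := by
    intro n
    apply hKsub
    exact ⟨e n, by simp [Metric.mem_closedBall, hne n], rfl⟩
  obtain ⟨z, hzK, φ, hφ, hconv⟩ := hK.tendsto_subseq hmem
  -- z = 0 since B (e n) converges weakly to 0
  have hz : z = 0 := by
    have hz0 : ∀ x : H, ⟪z, x⟫ = 0 := by
      intro x
      have h1 : Tendsto (fun k => ⟪B (e (φ k)), x⟫) atTop (𝓝 ⟪z, x⟫) :=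
        ((continuous_inner.comp (continuous_id.prodMk continuous_const)).continuousAt.tendsto.comp
          hconv)
      have h2 : Tendsto (fun k => ⟪B (e (φ k)), x⟫) atTop (𝓝 0) := by
        have := (coeff_tendsto_zero e (B x)).comp hφ.tendsto_atTop
        simpa [Function.comp_def, hB_symm] using this
      exact tendsto_nhds_unique h1 h2
    have := hz0 z
    rwa [real_inner_self_eq_norm_sq, pow_eq_zero_iff (n := 2) (by norm_num),
      norm_eq_zero] at this
  rw [hz] at hconv
  have hnorm : Tendsto (fun k => ‖B (e (φ k))‖) atTop (𝓝 0) := by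
    simpa using hconv.norm
  obtain ⟨k, hk⟩ := (hnorm.eventually (eventually_lt_nhds hε)).exists
  refine ⟨φ k, lt_of_le_of_lt ?_ hk⟩
  calc ⟪B (e (φ k)), e (φ k)⟫ ≤ ‖B (e (φ k))‖ * ‖(e (φ k) : H)‖ := real_inner_le_norm _ _
    _ = ‖B (e (φ k))‖ := by rw [hne, mul_one]

theorem stmt_9 {H : Type*} [NormedAddCommGroup H] [InnerProductSpace ℝ H]
    [CompleteSpace H]
    (e : HilbertBasis ℕ ℝ H) (B : H →L[ℝ] H)
    (hB_compact : IsCompactOperator B)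
    (hB_symm : ∀ x y : H, ⟪B x, y⟫ = ⟪x, B y⟫)
    (hB_pos : ∀ x : H, 0 ≤ ⟪B x, x⟫) :
    (∀ t : ℝ, 0 < t →
      (⨅ y : H, ((if 1 ≤ ‖y‖ then ‖y‖ ^ 2 else 2 - ‖y‖ ^ 2) + ⟪B y, y⟫ / (2 * t))) = 1) ∧
    ((if (1 : ℝ) ≤ ‖(0 : H)‖ then ‖(0 : H)‖ ^ 2 else 2 - ‖(0 : H)‖ ^ 2) = 2) ∧
    ¬ Tendsto
        (fun t : ℝ =>
          ⨅ y : H, ((if 1 ≤ ‖y‖ then ‖y‖ ^ 2 else 2 - ‖y‖ ^ 2) + ⟪B y, y⟫ / (2 * t)))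
        (𝓝[>] (0:ℝ)) (𝓝 2) := by
  have hinf : ∀ t : ℝ, 0 < t →
      (⨅ y : H, ((if 1 ≤ ‖y‖ then ‖y‖ ^ 2 else 2 - ‖y‖ ^ 2) + ⟪B y, y⟫ / (2 * t))) = 1 := by
    intro t ht
    have hlb : ∀ y : H,
        1 ≤ (if 1 ≤ ‖y‖ then ‖y‖ ^ 2 else 2 - ‖y‖ ^ 2) + ⟪B y, y⟫ / (2 * t) := by
      intro y
      have h1 : 0 ≤ ⟪B y, y⟫ / (2 * t) := div_nonneg (hB_pos y) (by linarith)
      split_ifs with h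
      · nlinarith
      · push_neg at h
        nlinarith [norm_nonneg y]
    have hbdd : BddBelow (range fun y : H =>
        (if 1 ≤ ‖y‖ then ‖y‖ ^ 2 else 2 - ‖y‖ ^ 2) + ⟪B y, y⟫ / (2 * t)) :=
      ⟨1, by rintro _ ⟨y, rfl⟩; exact hlb y⟩
    refine le_antisymm ?_ (le_ciInf hlb)
    refine le_of_forall_pos_le_add ?_
    intro ε hε
    obtain ⟨n, hn⟩ := key_small e B hB_compact hB_symm (2 * t * ε) (by positivity)
    have hne : ‖(e n : H)‖ = 1 := e.orthonormal.1 n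
    have h1 : (⨅ y : H, ((if 1 ≤ ‖y‖ then ‖y‖ ^ 2 else 2 - ‖y‖ ^ 2) + ⟪B y, y⟫ / (2 * t)))
        ≤ (if 1 ≤ ‖(e n : H)‖ then ‖(e n : H)‖ ^ 2 else 2 - ‖(e n : H)‖ ^ 2)
          + ⟪B (e n), e n⟫ / (2 * t) := ciInf_le hbdd (e n)
    rw [hne] at h1
    simp only [le_refl, if_true, one_pow] at h1
    have h2 : ⟪B (e n), e n⟫ / (2 * t) < ε := by
      rw [div_lt_iff₀ (by linarith)]
      linarith
    linarith
  refine ⟨hinf, by simp, ?_⟩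
  intro hT
  have heq : Tendsto (fun t : ℝ =>
      ⨅ y : H, ((if 1 ≤ ‖y‖ then ‖y‖ ^ 2 else 2 - ‖y‖ ^ 2) + ⟪B y, y⟫ / (2 * t)))
      (𝓝[>] (0:ℝ)) (𝓝 1) := by
    apply Tendsto.congr' _ tendsto_const_nhds
    filter_upwards [self_mem_nhdsWithin] with t ht
    exact (hinf t ht).symm
  have : (2 : ℝ) = 1 := tendsto_nhds_unique hT heq
  norm_num at this
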